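/- Let A be a finite nonempty set, let π⁻ ∈ Δ(A) be strictly positive, let δ : A → ℝ, and define the exponential-weights update π⁺(a) = π⁻(a)·exp(δ(a)) / Σ_b π⁻(b)·exp(δ(b)). Then for every π ∈ Δ(A): KL(π‖π⁺) ≤ KL(π‖π⁻) + Σ_a (π⁻(a) − π(a))·δ(a) + (1/8)·osc(δ)², where osc(δ) = max_a δ(a) − min_a δ(a). -/

import Mathlib

open Finset

/-- The probability simplex on a finite type: nonnegative entries summing to one. -/
def IsSimplex {A : Type*} [Fintype A] (p : A → ℝ) : Prop :=
  (∀ a, 0 ≤ p a) ∧ ∑ a, p a = 1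

/-- KL divergence between two distributions on a finite type
(with the convention `0 * log 0 = 0`, which holds in Lean since `Real.log 0 = 0`). -/
noncomputable def KLdiv {A : Type*} [Fintype A] (p q : A → ℝ) : ℝ :=
  ∑ a, p a * Real.log (p a / q a)

lemma den_pos {p e : ℝ} (hp0 : 0 ≤ p) (hp1 : p ≤ 1) (he : 0 < e) :
    0 < 1 - p + p * e := by
  rcases lt_or_eq_of_le hp1 with h | h
  · nlinarith [mul_nonneg hp0 he.le]
  · subst h; simpa using he

/-- Single-variable Hoeffding lemma. -/
lemma key_hoeffding (p : ℝ) (hp0 : 0 ≤ p) (hp1 : p ≤ 1) (h : ℝ) (hh : 0 ≤ h) :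
    Real.log (1 - p + p * Real.exp h) ≤ p * h + h ^ 2 / 8 := by
  have hden : ∀ t : ℝ, 0 < 1 - p + p * Real.exp t := fun t =>
    den_pos hp0 hp1 (Real.exp_pos t)
  set g : ℝ → ℝ := fun t => p * Real.exp t / (1 - p + p * Real.exp t) with hgdef
  have hg : ∀ t : ℝ, HasDerivAt g
      (p * Real.exp t * (1 - p) / (1 - p + p * Real.exp t) ^ 2) t := by
    intro t
    have h1 : HasDerivAt (fun t => p * Real.exp t) (p * Real.exp t) t :=
      (Real.hasDerivAt_exp t).const_mul p
    have h2 : HasDerivAt (fun t => 1 - p + p * Real.exp t) (p * Real.exp t) t :=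
      h1.const_add (1 - p)
    have hthis := h1.div h2 (hden t).ne'
    have heq : p * Real.exp t * (1 - p) / (1 - p + p * Real.exp t) ^ 2
        = (p * Real.exp t * (1 - p + p * Real.exp t)
            - p * Real.exp t * (p * Real.exp t)) / (1 - p + p * Real.exp t) ^ 2 := by
      congr 1; ring
    rw [heq]; exact hthis
  -- G t = p + t/4 - g t is monotone on [0, ∞)
  set G : ℝ → ℝ := fun t => p + t / 4 - g t with hGdef
  have hG : ∀ t : ℝ, HasDerivAt G
      (1 / 4 - p * Real.exp t * (1 - p) / (1 - p + p * Real.exp t) ^ 2) t := by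
    intro t
    have h1 : HasDerivAt (fun t : ℝ => p + t / 4) (1 / 4) t := by
      simpa using ((hasDerivAt_id t).div_const 4).const_add p
    exact h1.sub (hg t)
  have hGmono : MonotoneOn G (Set.Ici 0) := by
    apply monotoneOn_of_deriv_nonneg (convex_Ici 0)
    · exact fun t _ => (hG t).continuousAt.continuousWithinAt
    · exact fun t _ => ((hG t).differentiableAt).differentiableWithinAt
    · intro t _
      rw [(hG t).deriv]
      have hd := hden t
      have he := Real.exp_pos t
      have key : p * Real.exp t * (1 - p) ≤ (1 - p + p * Real.exp t) ^ 2 / 4 := by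
        nlinarith [sq_nonneg (1 - p - p * Real.exp t)]
      have : (0:ℝ) < (1 - p + p * Real.exp t) ^ 2 := by positivity
      rw [sub_nonneg, div_le_iff₀ this]
      linarith [key, (div_le_iff₀ this).mp (le_refl (p * Real.exp t * (1 - p) / (1 - p + p * Real.exp t) ^ 2))]
  have hG0 : G 0 = 0 := by
    simp [hGdef, hgdef, Real.exp_zero]
  have hGnonneg : ∀ t ∈ Set.Ici (0:ℝ), 0 ≤ G t := by
    intro t ht
    have := hGmono (Set.self_mem_Ici) ht ht
    rw [hG0] at this
    exact this
  -- F t = p*t + t^2/8 - log(1-p+p e^t) is monotone on [0, ∞)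
  set F : ℝ → ℝ := fun t => p * t + t ^ 2 / 8 - Real.log (1 - p + p * Real.exp t) with hFdef
  have hF : ∀ t : ℝ, HasDerivAt F (p + t / 4 - g t) t := by
    intro t
    have h1 : HasDerivAt (fun t : ℝ => p * t) p t := by
      simpa using (hasDerivAt_id t).const_mul p
    have h2 : HasDerivAt (fun t : ℝ => t ^ 2 / 8) (t / 4) t := by
      have := (hasDerivAt_pow 2 t).div_const 8
      exact this.congr_deriv (by ring)
    have h3 : HasDerivAt (fun t => 1 - p + p * Real.exp t) (p * Real.exp t) t :=
      ((Real.hasDerivAt_exp t).const_mul p).const_add (1 - p)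
    have h4 : HasDerivAt (fun t => Real.log (1 - p + p * Real.exp t))
        (p * Real.exp t / (1 - p + p * Real.exp t)) t := h3.log (hden t).ne'
    have := (h1.add h2).sub h4
    exact this
  have hFmono : MonotoneOn F (Set.Ici 0) := by
    apply monotoneOn_of_deriv_nonneg (convex_Ici 0)
    · exact fun t _ => (hF t).continuousAt.continuousWithinAt
    · exact fun t _ => ((hF t).differentiableAt).differentiableWithinAt
    · intro t ht
      rw [(hF t).deriv]
      have := hGnonneg t (le_of_lt (by simpa [interior_Ici] using ht))
      simpa [hGdef] using this
  have hF0 : F 0 = 0 := by simp [hFdef, Real.exp_zero]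
  have := hFmono (Set.self_mem_Ici) (Set.mem_Ici.mpr hh) hh
  rw [hF0] at this
  simp only [hFdef] at this
  linarith

/-- Finite-sum Hoeffding lemma. -/
lemma sum_hoeffding {A : Type*} [Fintype A] [Nonempty A]
    (w : A → ℝ) (hwpos : ∀ a, 0 < w a) (hwsum : ∑ a, w a = 1)
    (δ : A → ℝ) (m M : ℝ) (hm : ∀ a, m ≤ δ a) (hM : ∀ a, δ a ≤ M) :
    Real.log (∑ a, w a * Real.exp (δ a)) ≤ ∑ a, w a * δ a + (M - m) ^ 2 / 8 := by
  obtain ⟨a0⟩ := (inferInstance : Nonempty A)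
  have hmM : m ≤ M := le_trans (hm a0) (hM a0)
  set μ := ∑ a, w a * δ a with hμdef
  have hμm : m ≤ μ := by
    calc m = ∑ a, w a * m := by rw [← Finset.sum_mul, hwsum, one_mul]
    _ ≤ μ := Finset.sum_le_sum fun a _ => mul_le_mul_of_nonneg_left (hm a) (hwpos a).le
  have hμM : μ ≤ M := by
    calc μ ≤ ∑ a, w a * M := Finset.sum_le_sum fun a _ => mul_le_mul_of_nonneg_left (hM a) (hwpos a).le
    _ = M := by rw [← Finset.sum_mul, hwsum, one_mul]
  rcases eq_or_lt_of_le hmM with he | hlt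
  · -- constant case
    subst he
    have hδ : ∀ a, δ a = m := fun a => le_antisymm (hM a) (hm a)
    have : ∑ a, w a * Real.exp (δ a) = Real.exp m := by
      rw [show (fun a => w a * Real.exp (δ a)) = fun a => w a * Real.exp m from
        funext fun a => by rw [hδ a]]
      rw [← Finset.sum_mul, hwsum, one_mul]
    rw [this, Real.log_exp]
    have : μ = m := by
      rw [hμdef, show (fun a => w a * δ a) = fun a => w a * m from funext fun a => by rw [hδ a],
        ← Finset.sum_mul, hwsum, one_mul]
    simp [← hμdef, this]
  · set hgap := M - m with hgapdef
    have hgap0 : 0 < M - m := by linarith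
    set p := (μ - m) / (M - m) with hpdef
    have hp0 : 0 ≤ p := div_nonneg (by linarith) hgap0.le
    have hp1 : p ≤ 1 := (div_le_one hgap0).mpr (by linarith)
    -- pointwise convexity bound
    have hconv : ∀ a, Real.exp (δ a)
        ≤ ((M - δ a) * Real.exp m + (δ a - m) * Real.exp M) / (M - m) := by
      intro a
      have hs0 : 0 ≤ (M - δ a) / (M - m) := div_nonneg (by linarith [hM a]) hgap0.le
      have ht0 : 0 ≤ (δ a - m) / (M - m) := div_nonneg (by linarith [hm a]) hgap0.le
      have hst : (M - δ a) / (M - m) + (δ a - m) / (M - m) = 1 := by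
        field_simp
        ring
      have := convexOn_exp.2 (Set.mem_univ m) (Set.mem_univ M) hs0 ht0 hst
      simp only [smul_eq_mul] at this
      have harg : (M - δ a) / (M - m) * m + (δ a - m) / (M - m) * M = δ a := by
        field_simp
        ring
      rw [harg] at this
      calc Real.exp (δ a) ≤ (M - δ a) / (M - m) * Real.exp m + (δ a - m) / (M - m) * Real.exp M := this
      _ = ((M - δ a) * Real.exp m + (δ a - m) * Real.exp M) / (M - m) := by ring
    have hZpos : (0:ℝ) < ∑ a, w a * Real.exp (δ a) :=
      Finset.sum_pos (fun a _ => mul_pos (hwpos a) (Real.exp_pos _)) Finset.univ_nonempty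
    have hZle : ∑ a, w a * Real.exp (δ a)
        ≤ ((M - μ) * Real.exp m + (μ - m) * Real.exp M) / (M - m) := by
      calc ∑ a, w a * Real.exp (δ a)
          ≤ ∑ a, w a * (((M - δ a) * Real.exp m + (δ a - m) * Real.exp M) / (M - m)) :=
            Finset.sum_le_sum fun a _ => mul_le_mul_of_nonneg_left (hconv a) (hwpos a).le
        _ = ((M - μ) * Real.exp m + (μ - m) * Real.exp M) / (M - m) := by
            have e1 : ∑ a, w a * (M - δ a) = M - μ := by
              simp only [mul_sub]
              rw [Finset.sum_sub_distrib, ← Finset.sum_mul, hwsum, one_mul, hμdef]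
            have e2 : ∑ a, w a * (δ a - m) = μ - m := by
              simp only [mul_sub]
              rw [Finset.sum_sub_distrib, ← Finset.sum_mul, hwsum, one_mul, hμdef]
            calc ∑ a, w a * (((M - δ a) * Real.exp m + (δ a - m) * Real.exp M) / (M - m))
                = (∑ a, (w a * (M - δ a) * Real.exp m + w a * (δ a - m) * Real.exp M)) / (M - m) := by
                  simp only [← mul_div_assoc]
                  rw [← Finset.sum_div]
                  congr 1
                  apply Finset.sum_congr rfl
                  intro a _
                  ring
              _ = ((M - μ) * Real.exp m + (μ - m) * Real.exp M) / (M - m) := by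
                  rw [Finset.sum_add_distrib, ← Finset.sum_mul, ← Finset.sum_mul, e1, e2]
    have hrhs : ((M - μ) * Real.exp m + (μ - m) * Real.exp M) / (M - m)
        = Real.exp m * (1 - p + p * Real.exp (M - m)) := by
      have : Real.exp M = Real.exp m * Real.exp (M - m) := by
        rw [← Real.exp_add]; ring_nf
      rw [this, hpdef]
      field_simp
      ring
    have hdpos : 0 < 1 - p + p * Real.exp (M - m) :=
      den_pos hp0 hp1 (Real.exp_pos (M - m))
    have hlog := Real.log_le_log hZpos (hZle.trans_eq hrhs)
    rw [Real.log_mul (Real.exp_pos m).ne' hdpos.ne', Real.log_exp] at hlog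
    have hkey := key_hoeffding p hp0 hp1 (M - m) hgap0.le
    have hph : p * (M - m) = μ - m := by
      rw [hpdef]; field_simp
    calc Real.log (∑ a, w a * Real.exp (δ a))
        ≤ m + Real.log (1 - p + p * Real.exp (M - m)) := hlog
      _ ≤ m + (p * (M - m) + (M - m) ^ 2 / 8) := by linarith
      _ = μ + (M - m) ^ 2 / 8 := by rw [hph]; ring
/-- Hoeffding-type online mirror descent descent inequality for the
exponential-weights update `π⁺(a) = π⁻(a) exp(δ(a)) / Σ_b π⁻(b) exp(δ(b))`:
`KL(π‖π⁺) ≤ KL(π‖π⁻) + Σ_a (π⁻(a) − π(a)) δ(a) + (1/8) osc(δ)²`. -/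
theorem stmt12 {A : Type*} [Fintype A] [Nonempty A]
    (πminus : A → ℝ) (hπ : IsSimplex πminus) (hπpos : ∀ a, 0 < πminus a)
    (δ : A → ℝ)
    (πplus : A → ℝ)
    (hπplus : ∀ a, πplus a
      = πminus a * Real.exp (δ a) / ∑ b, πminus b * Real.exp (δ b))
    (π : A → ℝ) (hπ' : IsSimplex π) :
    KLdiv π πplus
      ≤ KLdiv π πminus + (∑ a, (πminus a - π a) * δ a)
        + (1/8) * (Finset.univ.sup' Finset.univ_nonempty δ
            - Finset.univ.inf' Finset.univ_nonempty δ)^2 := by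
  set Z := ∑ b, πminus b * Real.exp (δ b) with hZdef
  have hZpos : 0 < Z :=
    Finset.sum_pos (fun a _ => mul_pos (hπpos a) (Real.exp_pos _)) Finset.univ_nonempty
  set M := Finset.univ.sup' Finset.univ_nonempty δ with hMdef
  set m := Finset.univ.inf' Finset.univ_nonempty δ with hmdef
  have hmle : ∀ a, m ≤ δ a := fun a => Finset.inf'_le δ (Finset.mem_univ a)
  have hMle : ∀ a, δ a ≤ M := fun a => Finset.le_sup' δ (Finset.mem_univ a)
  -- termwise identity
  have hterm : ∀ a, π a * Real.log (π a / πplus a)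
      = π a * Real.log (π a / πminus a) + π a * (Real.log Z - δ a) := by
    intro a
    rcases eq_or_lt_of_le (hπ'.1 a) with h0 | h0
    · simp [← h0]
    · rw [hπplus a]
      have hne1 : πminus a ≠ 0 := (hπpos a).ne'
      have hne2 : Real.exp (δ a) ≠ 0 := (Real.exp_pos _).ne'
      have e1 : π a / (πminus a * Real.exp (δ a) / Z)
          = (π a / πminus a) * (Z / Real.exp (δ a)) := by
        field_simp
      rw [e1, Real.log_mul (div_ne_zero h0.ne' hne1) (div_ne_zero hZpos.ne' hne2),
        Real.log_div hZpos.ne' hne2, Real.log_exp]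
      ring
  have hKL : KLdiv π πplus = KLdiv π πminus + (Real.log Z - ∑ a, π a * δ a) := by
    unfold KLdiv
    rw [show (fun a => π a * Real.log (π a / πplus a))
        = fun a => π a * Real.log (π a / πminus a) + π a * (Real.log Z - δ a) from
      funext hterm]
    rw [Finset.sum_add_distrib]
    congr 1
    simp only [mul_sub]
    rw [Finset.sum_sub_distrib, ← Finset.sum_mul, hπ'.2, one_mul]
  have hhoeff : Real.log Z ≤ ∑ a, πminus a * δ a + (M - m) ^ 2 / 8 :=
    sum_hoeffding πminus hπpos hπ.2 δ m M hmle hMle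
  have hsum : ∑ a, (πminus a - π a) * δ a = ∑ a, πminus a * δ a - ∑ a, π a * δ a := by
    simp only [sub_mul]
    rw [Finset.sum_sub_distrib]
  rw [hKL, hsum]
  ring_nf
  nlinarith [hhoeff]
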